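/- Let Γ ⊂ (0,1)² be the image of a simple closed C² curve γ : [0, L_Γ] → ℝ² parametrized by arclength (so its length is L_Γ) with curvature bounded by v. Let ψ ∈ L²(ℝ²) be compactly supported and let c = (c₁,c₂) with c₁,c₂ > 0. Then there exists a constant C > 0, depending only on L_Γ, v, the support of ψ and c (but not on j), such that for every j ∈ ℕ₀ the number of pairs (k,m) with k ∈ ℤ, |k| ≤ 2^{⌈j/2⌉}, m ∈ ℤ², for which supp ψ_{j,k,m,1} ∩ Γ ≠ ∅, is at most C · 2^{3j/2}. -/

import Mathlib

open MeasureTheory Real Filter Set ENNReal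

noncomputable section

/-- Partial derivative in the first coordinate. -/
def pd1 (f : ℝ × ℝ → ℝ) : ℝ × ℝ → ℝ := fun x => deriv (fun t => f (t, x.2)) x.1

/-- Partial derivative in the second coordinate. -/
def pd2 (f : ℝ × ℝ → ℝ) : ℝ × ℝ → ℝ := fun x => deriv (fun t => f (x.1, t)) x.2

/-- The `L²(ℝ²)` inner product of two real-valued functions. -/
def L2inner (f g : ℝ × ℝ → ℝ) : ℝ := ∫ x : ℝ × ℝ, f x * g x

/-- The open unit square `(0,1)²`. -/
def unitSq : Set (ℝ × ℝ) := Ioo (0:ℝ) 1 ×ˢ Ioo (0:ℝ) 1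

/-- `B` is a region whose boundary is the image of a simple closed `C^n` curve,
parametrized by arclength (period `len`), with curvature bounded by `v`. -/
def IsCartoonRegion (n : ℕ∞) (v : ℝ) (B : Set (ℝ × ℝ)) : Prop :=
  ∃ (len : ℝ) (γ : ℝ → ℝ × ℝ), 0 < len ∧ ContDiff ℝ n γ ∧
    Function.Periodic γ len ∧
    (∀ s ∈ Ico (0:ℝ) len, ∀ t ∈ Ico (0:ℝ) len, γ s = γ t → s = t) ∧
    (∀ t, ‖deriv γ t‖ = 1) ∧
    (∀ t, ‖deriv (deriv γ) t‖ ≤ v) ∧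
    frontier B = range γ

/-- `f = g₁ + χ_B g₂` is a cartoon-like function with the given data. -/
def CartoonWith (n : ℕ∞) (v : ℝ) (g₁ g₂ : ℝ × ℝ → ℝ) (B : Set (ℝ × ℝ))
    (f : ℝ × ℝ → ℝ) : Prop :=
  ContDiff ℝ n g₁ ∧ ContDiff ℝ n g₂ ∧
  tsupport g₁ ⊆ unitSq ∧ tsupport g₂ ⊆ unitSq ∧ B ⊆ unitSq ∧
  IsCartoonRegion n v B ∧
  f = fun x => g₁ x + B.indicator (fun _ => (1:ℝ)) x * g₂ x

/-- `f` is cartoon-like with discontinuity region `B`. -/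
def CartoonWithB (n : ℕ∞) (v : ℝ) (B : Set (ℝ × ℝ)) (f : ℝ × ℝ → ℝ) : Prop :=
  ∃ g₁ g₂, CartoonWith n v g₁ g₂ B f

/-- `f ∈ E^n(v)`: the class of cartoon-like functions. -/
def Cartoon (n : ℕ∞) (v : ℝ) (f : ℝ × ℝ → ℝ) : Prop :=
  ∃ B, CartoonWithB n v B f

/-- `w` is the weak partial derivative `∂₁^a ∂₂^b u`. -/
def IsWeakPartialDeriv (a b : ℕ) (u w : ℝ × ℝ → ℝ) : Prop :=
  ∀ φ : ℝ × ℝ → ℝ, ContDiff ℝ (⊤ : ℕ∞) φ → HasCompactSupport φ →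
    ∫ x : ℝ × ℝ, u x * (pd1^[a] (pd2^[b] φ)) x = (-1 : ℝ) ^ (a + b) * ∫ x : ℝ × ℝ, w x * φ x

/-- `u ∈ E^{l,n}(v)`: all weak derivatives of order `l` exist and are cartoon-like of
smoothness `n`. -/
def MemElClass (l : ℕ) (n : ℕ∞) (v : ℝ) (u : ℝ × ℝ → ℝ) : Prop :=
  MemLp u 2 (volume : Measure (ℝ × ℝ)) ∧
  ∀ a b : ℕ, a + b = l → ∃ w, IsWeakPartialDeriv a b u w ∧ Cartoon n v w

/-- The shearlet elements `ψ_{j,k,m,ι}` for `ι = 1` (horizontal cone) and `ι = -1`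
(vertical cone). -/
def shearEl (ψ : ℝ × ℝ → ℝ) (c₁ c₂ : ℝ) (j : ℕ) (k : ℤ) (m : ℤ × ℤ) (ι : ℤ) :
    ℝ × ℝ → ℝ := fun x =>
  if ι = 1 then
    (2:ℝ) ^ (3 * (j:ℝ) / 4) *
      ψ ((2:ℝ) ^ (j:ℝ) * x.1 + (k:ℝ) * (2:ℝ) ^ ((j:ℝ)/2) * x.2 - c₁ * (m.1 : ℝ),
         (2:ℝ) ^ ((j:ℝ)/2) * x.2 - c₂ * (m.2 : ℝ))
  else
    (2:ℝ) ^ (3 * (j:ℝ) / 4) *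
      ψ ((k:ℝ) * (2:ℝ) ^ ((j:ℝ)/2) * x.1 + (2:ℝ) ^ (j:ℝ) * x.2 - c₁ * (m.2 : ℝ),
         (2:ℝ) ^ ((j:ℝ)/2) * x.1 - c₂ * (m.1 : ℝ))

/-- Indices `(j,k,m,ι)` of the cone-adapted shearlet system. -/
abbrev ShearIdx : Type := ℕ × ℤ × (ℤ × ℤ) × ℤ

/-- The admissibility condition on shearlet indices: `ι ∈ {0,1,-1}`, with `j = k = 0`
in the coarse case `ι = 0`, and `|k| ≤ 2^⌈j/2⌉` in the cone cases. -/
def inLambda (p : ShearIdx) : Prop :=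
  (p.2.2.2 = 0 ∧ p.1 = 0 ∧ p.2.1 = 0) ∨
  ((p.2.2.2 = 1 ∨ p.2.2.2 = -1) ∧ |p.2.1| ≤ 2 ^ ((p.1 + 1) / 2))

/-- The index set `Λ` of the cone-adapted shearlet system. -/
def Lambda : Type := {p : ShearIdx // inLambda p}

/-- The full cone-adapted shearlet system `SH(φ, ψ, ψ̃, c)`. -/
def shearSys (φ ψ : ℝ × ℝ → ℝ) (c₁ c₂ : ℝ) (p : ShearIdx) : ℝ × ℝ → ℝ :=
  if p.2.2.2 = 0 then fun x => φ (x.1 - c₁ * (p.2.2.1.1 : ℝ), x.2 - c₁ * (p.2.2.1.2 : ℝ))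
  else shearEl ψ c₁ c₂ p.1 p.2.1 p.2.2.1 p.2.2.2

/-- `θ(x₁,x₂) = θ₁(x₁)θ₂(x₂)` is separable. -/
def SeparableFun (θ : ℝ × ℝ → ℝ) : Prop :=
  ∃ θ₁ θ₂ : ℝ → ℝ, ∀ x : ℝ × ℝ, θ x = θ₁ x.1 * θ₂ x.2

/-- The 2D Fourier transform. -/
def fourier2 (θ : ℝ × ℝ → ℝ) (ξ : ℝ × ℝ) : ℂ :=
  ∫ x : ℝ × ℝ, Complex.exp (-2 * Real.pi * Complex.I * (x.1 * ξ.1 + x.2 * ξ.2)) * (θ x : ℂ)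

/-- The Fourier decay conditions (i) and (ii) on the shearlet generator `θ`. -/
def FourierDecayConds (θ : ℝ × ℝ → ℝ) : Prop :=
  ∃ (τ ν C₀ : ℝ) (h : ℝ → ℝ), 5 < τ ∧ 4 ≤ ν ∧ 0 < C₀ ∧ Integrable h ∧
    (∀ ξ : ℝ × ℝ, ξ.2 ≠ 0 → ‖fourier2 θ ξ‖ ≤
      C₀ * min 1 (|ξ.1| ^ τ) * min 1 (|ξ.1| ^ (-ν)) * min 1 (|ξ.2| ^ (-ν))) ∧
    (∀ ξ : ℝ × ℝ, ξ.1 ≠ 0 → ‖deriv (fun t => fourier2 θ (ξ.1, t)) ξ.2‖ ≤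
      |h ξ.1| * (1 + |ξ.2 / ξ.1|) ^ (-ν))

/-- `θ` has `M` vanishing moments in the `x₁`-direction. -/
def VanishingMomentsX1 (M : ℕ) (θ : ℝ × ℝ → ℝ) : Prop :=
  ∀ x₂ : ℝ, ∀ n : ℕ, n < M → ∫ t : ℝ, t ^ n * θ (t, x₂) = 0

/-- Unconditional convergence of `∑ F i` to `g` in `L²(ℝ²)`. -/
def HasL2Sum {I : Type*} (F : I → ℝ × ℝ → ℝ) (g : ℝ × ℝ → ℝ) : Prop :=
  Tendsto (fun s : Finset I => eLpNorm (fun x => g x - ∑ i ∈ s, F i x) 2 volume)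
    atTop (nhds 0)

/-- `(Ψ i)` is a frame for `L²(ℝ²)`. -/
def IsFrameFamily {I : Type*} (Ψ : I → ℝ × ℝ → ℝ) : Prop :=
  ∃ A B : ℝ, 0 < A ∧ A ≤ B ∧ ∀ f : ℝ × ℝ → ℝ, MemLp f 2 (volume : Measure (ℝ × ℝ)) →
    A * ∫ x : ℝ × ℝ, f x ^ 2 ≤ ∑' i, (L2inner f (Ψ i)) ^ 2 ∧
    ∑' i, (L2inner f (Ψ i)) ^ 2 ≤ B * ∫ x : ℝ × ℝ, f x ^ 2

/-- `(Ψd i)` is a dual family for `(Ψ i)`: the synthesis operator is bounded and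
one has the reconstruction formula `f = ∑ ⟨f, Ψ i⟩ Ψd i` in `L²`. -/
def IsDualFamily {I : Type*} (Ψ Ψd : I → ℝ × ℝ → ℝ) : Prop :=
  (∃ C : ℝ, 0 < C ∧ ∀ c : I → ℝ, Summable (fun i => (c i) ^ 2) →
    ∃ g : ℝ × ℝ → ℝ, MemLp g 2 (volume : Measure (ℝ × ℝ)) ∧
      HasL2Sum (fun i x => c i * Ψd i x) g ∧
      ∫ x : ℝ × ℝ, g x ^ 2 ≤ C ^ 2 * ∑' i, (c i) ^ 2) ∧
  ∀ f : ℝ × ℝ → ℝ, MemLp f 2 (volume : Measure (ℝ × ℝ)) →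
    Summable (fun i => (L2inner f (Ψ i)) ^ 2) ∧
    HasL2Sum (fun i x => L2inner f (Ψ i) * Ψd i x) f

/-- The metric on the torus `[-π/2, π/2]`. -/
def torusDist (a b : ℝ) : ℝ := min |a - b| (π + min a b - max a b)

/-- The angle `arctan(s^ι)`, with the convention `arctan(1/0) = π/2`. -/
def slopeAngle (ι : ℤ) (s : ℝ) : ℝ :=
  if ι = 1 then arctan s else if s = 0 then π / 2 else arctan s⁻¹

/-- `s^ι`: `s` for `ι = 1` and `1/s` for `ι = -1`. -/
def sPow (ι : ℤ) (s : ℝ) : ℝ := if ι = 1 then s else s⁻¹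

/-- The unit normal of an arclength-parametrized curve: the rotation of the unit
tangent by `π/2`. -/
def normalAt (γ : ℝ → ℝ × ℝ) (s : ℝ) : ℝ × ℝ := (-(deriv γ s).2, (deriv γ s).1)


/-- Card of a symmetric integer interval, in `ℝ`. -/
lemma int_Icc_card_real (a : ℤ) (ha : 0 ≤ a) :
    ((Finset.Icc (-a) a).card : ℝ) = 2 * (a : ℝ) + 1 := by
  have h1 : ((Finset.Icc (-a) a).card : ℤ) = a + 1 - -a :=
    Int.card_Icc_of_le (a := -a) (b := a) (by omega)
  have h2 : (((Finset.Icc (-a) a).card : ℤ) : ℝ) = ((a + 1 - -a : ℤ) : ℝ) := by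
    exact_mod_cast h1
  push_cast at h2
  push_cast
  linarith

set_option maxHeartbeats 1000000 in
/-- at scale `j`, at most `C·2^{3j/2}` shearlet indices `(k,m)` in one
frequency cone have support meeting a fixed discontinuity curve `Γ`. -/
theorem count_shearlets_meeting_curve
    (len v : ℝ) (hlen : 0 < len) (γ : ℝ → ℝ × ℝ)
    (hγsm : ContDiff ℝ 2 γ) (hγper : Function.Periodic γ len)
    (hγinj : ∀ s ∈ Ico (0:ℝ) len, ∀ t ∈ Ico (0:ℝ) len, γ s = γ t → s = t)
    (hγspeed : ∀ t, ‖deriv γ t‖ = 1)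
    (hγcurv : ∀ t, ‖deriv (deriv γ) t‖ ≤ v)
    (hγrange : range γ ⊆ unitSq)
    (ψ : ℝ × ℝ → ℝ)
    (hψ : MemLp ψ 2 (volume : Measure (ℝ × ℝ)))
    (hψcs : HasCompactSupport ψ)
    (c₁ c₂ : ℝ) (hc₁ : 0 < c₁) (hc₂ : 0 < c₂) :
    ∃ C : ℝ, 0 < C ∧ ∀ j : ℕ,
      {km : ℤ × (ℤ × ℤ) | |km.1| ≤ 2 ^ ((j + 1) / 2) ∧
        (tsupport (shearEl ψ c₁ c₂ j km.1 km.2 1) ∩ range γ).Nonempty}.Finite ∧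
      (Nat.card {km : ℤ × (ℤ × ℤ) | |km.1| ≤ 2 ^ ((j + 1) / 2) ∧
        (tsupport (shearEl ψ c₁ c₂ j km.1 km.2 1) ∩ range γ).Nonempty} : ℝ) ≤
        C * (2:ℝ) ^ (3 * (j:ℝ) / 2) := by
  classical
  -- a bound on the support of ψ
  obtain ⟨R₀, hR₀⟩ := hψcs.isBounded.subset_closedBall 0
  set R : ℝ := max R₀ 0 with hRdef
  have hR0 : 0 ≤ R := le_max_right _ _
  have hRψ : ∀ y ∈ tsupport ψ, |y.1| ≤ R ∧ |y.2| ≤ R := by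
    intro y hy
    have h1 : ‖y‖ ≤ R₀ := mem_closedBall_zero_iff.mp (hR₀ hy)
    have h1' : ‖y‖ ≤ R := le_trans h1 (le_max_left _ _)
    constructor
    · exact le_trans (by simpa using norm_fst_le y) h1'
    · exact le_trans (by simpa using norm_snd_le y) h1'
  -- γ is 1-Lipschitz, componentwise
  have hdiff : Differentiable ℝ γ := hγsm.differentiable (by norm_num)
  have hlip : LipschitzWith 1 γ := lipschitzWith_of_nnnorm_deriv_le hdiff (fun t => by
    rw [← NNReal.coe_le_coe, coe_nnnorm, NNReal.coe_one, hγspeed t])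
  have hγ1 : ∀ s t : ℝ, |(γ s).1 - (γ t).1| ≤ |s - t| := by
    intro s t
    have h2 := hlip.dist_le_mul s t
    rw [NNReal.coe_one, one_mul] at h2
    have h3 : |(γ s).1 - (γ t).1| ≤ dist (γ s) (γ t) := by
      rw [dist_eq_norm]
      simpa using norm_fst_le (γ s - γ t)
    calc |(γ s).1 - (γ t).1| ≤ dist (γ s) (γ t) := h3
      _ ≤ dist s t := h2
      _ = |s - t| := Real.dist_eq s t
  have hγ2 : ∀ s t : ℝ, |(γ s).2 - (γ t).2| ≤ |s - t| := by
    intro s t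
    have h2 := hlip.dist_le_mul s t
    rw [NNReal.coe_one, one_mul] at h2
    have h3 : |(γ s).2 - (γ t).2| ≤ dist (γ s) (γ t) := by
      rw [dist_eq_norm]
      simpa using norm_snd_le (γ s - γ t)
    calc |(γ s).2 - (γ t).2| ≤ dist (γ s) (γ t) := h3
      _ ≤ dist s t := h2
      _ = |s - t| := Real.dist_eq s t
  set D₁ : ℕ := ⌈(R + 3) / c₁⌉₊ + 1 with hD₁def
  set D₂ : ℕ := ⌈(R + 3) / c₂⌉₊ + 1 with hD₂def
  refine ⟨5 * (len + 1) * (2 * D₁ + 1) * (2 * D₂ + 1), ?_, fun j => ?_⟩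
  · have h1 : (0:ℝ) < len + 1 := by linarith
    positivity
  set e : ℕ := (j + 1) / 2 with he
  have h2j : (0:ℝ) < 2 ^ (j:ℝ) := Real.rpow_pos_of_pos (by norm_num) _
  have h2j2 : (0:ℝ) < 2 ^ ((j:ℝ)/2) := Real.rpow_pos_of_pos (by norm_num) _
  set N : ℕ := ⌈len * 2 ^ (j:ℝ)⌉₊ with hNdef
  have hN0 : 0 < N := Nat.ceil_pos.mpr (by positivity)
  have hNr0 : (0:ℝ) < N := by exact_mod_cast hN0
  set hstep : ℝ := len / N with hstepdef
  have hstep0 : 0 < hstep := div_pos hlen hNr0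
  have hNh : (N:ℝ) * hstep = len := by
    rw [hstepdef]; field_simp
  have hstep_le : hstep ≤ (2 ^ (j:ℝ))⁻¹ := by
    have hNr : len * 2 ^ (j:ℝ) ≤ N := Nat.le_ceil _
    rw [hstepdef, div_le_iff₀ hNr0, inv_mul_eq_div, le_div_iff₀ h2j]
    exact hNr
  set F₁ : ℤ → ℝ → ℝ := fun k s =>
    2 ^ (j:ℝ) * (γ s).1 + (k:ℝ) * 2 ^ ((j:ℝ)/2) * (γ s).2 with hF₁
  set F₂ : ℝ → ℝ := fun s => 2 ^ ((j:ℝ)/2) * (γ s).2 with hF₂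
  set src : Finset (ℤ × ℕ × ℤ × ℤ) :=
    (Finset.Icc (-(2 ^ e : ℤ)) (2 ^ e)) ×ˢ (Finset.range N) ×ˢ
      (Finset.Icc (-(D₁ : ℤ)) (D₁ : ℤ)) ×ˢ (Finset.Icc (-(D₂ : ℤ)) (D₂ : ℤ)) with hsrc
  set f : ℤ × ℕ × ℤ × ℤ → ℤ × ℤ × ℤ := fun p =>
    (p.1, p.2.2.1 + ⌊F₁ p.1 ((p.2.1 : ℝ) * hstep) / c₁⌋,
      p.2.2.2 + ⌊F₂ ((p.2.1 : ℝ) * hstep) / c₂⌋) with hf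
  set tgt : Finset (ℤ × ℤ × ℤ) := src.image f with htgt
  -- exponent estimates
  have he2 : ((e:ℕ):ℝ) ≤ ((j:ℝ) + 1) / 2 := by
    have h2 : e * 2 ≤ j + 1 := Nat.div_mul_le_self (j+1) 2
    have h3 : ((e:ℕ):ℝ) * 2 ≤ (j:ℝ) + 1 := by exact_mod_cast h2
    linarith
  have hkey : (2:ℝ) ^ (e:ℕ) * 2 ^ ((j:ℝ)/2) ≤ 2 * 2 ^ (j:ℝ) := by
    calc (2:ℝ) ^ (e:ℕ) * 2 ^ ((j:ℝ)/2) = 2 ^ ((e:ℝ) + (j:ℝ)/2) := by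
          rw [← Real.rpow_natCast 2 e, ← Real.rpow_add (by norm_num)]
      _ ≤ 2 ^ ((j:ℝ) + 1) := Real.rpow_le_rpow_of_exponent_le (by norm_num) (by linarith)
      _ = 2 * 2 ^ (j:ℝ) := by rw [Real.rpow_add (by norm_num), Real.rpow_one]; ring
  -- the main inclusion
  have hsub : {km : ℤ × (ℤ × ℤ) | |km.1| ≤ 2 ^ ((j + 1) / 2) ∧
      (tsupport (shearEl ψ c₁ c₂ j km.1 km.2 1) ∩ range γ).Nonempty} ⊆ ↑tgt := by
    rintro ⟨k, m⟩ ⟨hk, x, hxs, hxγ⟩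
    have hA : |2 ^ (j:ℝ) * x.1 + (k:ℝ) * 2 ^ ((j:ℝ)/2) * x.2 - c₁ * (m.1:ℝ)| ≤ R ∧
        |2 ^ ((j:ℝ)/2) * x.2 - c₂ * (m.2:ℝ)| ≤ R := by
      have hcl : IsClosed {y : ℝ × ℝ |
          |2 ^ (j:ℝ) * y.1 + (k:ℝ) * 2 ^ ((j:ℝ)/2) * y.2 - c₁ * (m.1:ℝ)| ≤ R ∧
          |2 ^ ((j:ℝ)/2) * y.2 - c₂ * (m.2:ℝ)| ≤ R} := by
        rw [setOf_and]
        exact (isClosed_le (by fun_prop) continuous_const).inter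
          (isClosed_le (by fun_prop) continuous_const)
      have hsupp : Function.support (shearEl ψ c₁ c₂ j k m 1) ⊆ {y : ℝ × ℝ |
          |2 ^ (j:ℝ) * y.1 + (k:ℝ) * 2 ^ ((j:ℝ)/2) * y.2 - c₁ * (m.1:ℝ)| ≤ R ∧
          |2 ^ ((j:ℝ)/2) * y.2 - c₂ * (m.2:ℝ)| ≤ R} := by
        intro y hy
        rw [Function.mem_support] at hy
        have hy2 : ψ (2 ^ (j:ℝ) * y.1 + (k:ℝ) * 2 ^ ((j:ℝ)/2) * y.2 - c₁ * (m.1:ℝ),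
            2 ^ ((j:ℝ)/2) * y.2 - c₂ * (m.2:ℝ)) ≠ 0 := by
          intro h0
          apply hy
          show shearEl ψ c₁ c₂ j k m 1 y = 0
          simp only [shearEl]
          norm_num
          refine Or.inr ?_
          rw [← Real.rpow_natCast 2 j]
          exact h0
        exact hRψ _ (subset_closure (Function.mem_support.mpr hy2))
      exact closure_minimal hsupp hcl hxs
    obtain ⟨s₀, rfl⟩ := hxγ
    obtain ⟨s, hs, hγeq⟩ := hγper.exists_mem_Ico₀ hlen s₀
    rw [hγeq] at hA
    set i : ℕ := ⌊s / hstep⌋₊ with hi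
    have hs0 : 0 ≤ s := hs.1
    have hiN : i < N := by
      rw [hi]
      refine (Nat.floor_lt (by positivity)).mpr ?_
      rw [div_lt_iff₀ hstep0]
      calc s < len := hs.2
        _ = N * hstep := hNh.symm
    have h1 : (i:ℝ) ≤ s / hstep := Nat.floor_le (by positivity)
    have h2 : s / hstep < i + 1 := Nat.lt_floor_add_one _
    have h3 : (i:ℝ) * hstep ≤ s := (le_div_iff₀ hstep0).mp h1
    have h4 : s < ((i:ℝ) + 1) * hstep := (div_lt_iff₀ hstep0).mp h2
    set t : ℝ := (i:ℝ) * hstep with ht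
    have hsi : |s - t| ≤ (2 ^ (j:ℝ))⁻¹ := by
      rw [ht, abs_of_nonneg (by linarith)]
      have h4' : s < (i:ℝ) * hstep + hstep := by nlinarith
      linarith [hstep_le]
    have hkr : |(k:ℝ)| ≤ (2:ℝ) ^ (e:ℕ) := by exact_mod_cast hk
    have hb1' : |(γ s).1 - (γ t).1| ≤ (2 ^ (j:ℝ))⁻¹ := (hγ1 s t).trans hsi
    have hb2' : |(γ s).2 - (γ t).2| ≤ (2 ^ (j:ℝ))⁻¹ := (hγ2 s t).trans hsi
    have hk2 : |(k:ℝ)| * 2 ^ ((j:ℝ)/2) ≤ 2 * 2 ^ (j:ℝ) :=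
      le_trans (mul_le_mul_of_nonneg_right hkr (le_of_lt h2j2)) hkey
    have hD1 : |F₁ k s - F₁ k t| ≤ 3 := by
      have expand : F₁ k s - F₁ k t =
          2 ^ (j:ℝ) * ((γ s).1 - (γ t).1) + (k:ℝ) * 2 ^ ((j:ℝ)/2) * ((γ s).2 - (γ t).2) := by
        simp only [hF₁]; ring
      have habs : |F₁ k s - F₁ k t| ≤
          2 ^ (j:ℝ) * |(γ s).1 - (γ t).1| + |(k:ℝ)| * 2 ^ ((j:ℝ)/2) * |(γ s).2 - (γ t).2| := by
        rw [expand]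
        refine (abs_add_le _ _).trans ?_
        rw [abs_mul, abs_mul, abs_mul, abs_of_pos h2j, abs_of_pos h2j2]
      refine habs.trans ?_
      have g1 : 2 ^ (j:ℝ) * |(γ s).1 - (γ t).1| ≤ 2 ^ (j:ℝ) * (2 ^ (j:ℝ))⁻¹ :=
        mul_le_mul_of_nonneg_left hb1' (le_of_lt h2j)
      have g2 : |(k:ℝ)| * 2 ^ ((j:ℝ)/2) * |(γ s).2 - (γ t).2| ≤
          (2 * 2 ^ (j:ℝ)) * (2 ^ (j:ℝ))⁻¹ :=
        mul_le_mul hk2 hb2' (abs_nonneg _) (by positivity)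
      have g3 : (2:ℝ) ^ (j:ℝ) * ((2:ℝ) ^ (j:ℝ))⁻¹ = 1 := mul_inv_cancel₀ (ne_of_gt h2j)
      have g4 : (2 * (2:ℝ) ^ (j:ℝ)) * ((2:ℝ) ^ (j:ℝ))⁻¹ = 2 := by
        rw [mul_assoc, g3]; ring
      linarith
    have hD2 : |F₂ s - F₂ t| ≤ 3 := by
      have expand : F₂ s - F₂ t = 2 ^ ((j:ℝ)/2) * ((γ s).2 - (γ t).2) := by
        simp only [hF₂]; ring
      rw [expand, abs_mul, abs_of_pos h2j2]
      have h5 : (2:ℝ) ^ ((j:ℝ)/2) ≤ 2 ^ (j:ℝ) :=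
        Real.rpow_le_rpow_of_exponent_le (by norm_num)
          (by have := Nat.cast_nonneg (α := ℝ) j; linarith)
      calc 2 ^ ((j:ℝ)/2) * |(γ s).2 - (γ t).2| ≤ 2 ^ (j:ℝ) * (2 ^ (j:ℝ))⁻¹ :=
            mul_le_mul h5 hb2' (abs_nonneg _) (le_of_lt h2j)
        _ = 1 := mul_inv_cancel₀ (ne_of_gt h2j)
        _ ≤ 3 := by norm_num
    have hm1 : |c₁ * (m.1:ℝ) - F₁ k t| ≤ R + 3 := by
      have ha1 : |F₁ k s - c₁ * (m.1:ℝ)| ≤ R := by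
        have := hA.1
        simp only [hF₁]
        exact this
      calc |c₁ * (m.1:ℝ) - F₁ k t|
          = |(c₁ * (m.1:ℝ) - F₁ k s) + (F₁ k s - F₁ k t)| := by congr 1; ring
        _ ≤ |c₁ * (m.1:ℝ) - F₁ k s| + |F₁ k s - F₁ k t| := abs_add_le _ _
        _ ≤ R + 3 := add_le_add (by rwa [abs_sub_comm]) hD1
    have hm2 : |c₂ * (m.2:ℝ) - F₂ t| ≤ R + 3 := by
      have ha2 : |F₂ s - c₂ * (m.2:ℝ)| ≤ R := by
        have := hA.2
        simp only [hF₂]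
        exact this
      calc |c₂ * (m.2:ℝ) - F₂ t|
          = |(c₂ * (m.2:ℝ) - F₂ s) + (F₂ s - F₂ t)| := by congr 1; ring
        _ ≤ |c₂ * (m.2:ℝ) - F₂ s| + |F₂ s - F₂ t| := abs_add_le _ _
        _ ≤ R + 3 := add_le_add (by rwa [abs_sub_comm]) hD2
    set q₁ : ℝ := F₁ k t / c₁ with hq₁
    set q₂ : ℝ := F₂ t / c₂ with hq₂
    have hm1' : |(m.1:ℝ) - q₁| ≤ (R + 3) / c₁ := by
      have heq : (m.1:ℝ) - q₁ = (c₁ * (m.1:ℝ) - F₁ k t) / c₁ := by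
        rw [hq₁]; field_simp
      rw [heq, abs_div, abs_of_pos hc₁]
      gcongr
    have hm2' : |(m.2:ℝ) - q₂| ≤ (R + 3) / c₂ := by
      have heq : (m.2:ℝ) - q₂ = (c₂ * (m.2:ℝ) - F₂ t) / c₂ := by
        rw [hq₂]; field_simp
      rw [heq, abs_div, abs_of_pos hc₂]
      gcongr
    have hfr1 : |q₁ - (⌊q₁⌋:ℝ)| ≤ 1 := by
      rw [abs_of_nonneg (by linarith [Int.floor_le q₁])]
      linarith [Int.lt_floor_add_one q₁]
    have hfr2 : |q₂ - (⌊q₂⌋:ℝ)| ≤ 1 := by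
      rw [abs_of_nonneg (by linarith [Int.floor_le q₂])]
      linarith [Int.lt_floor_add_one q₂]
    set d₁ : ℤ := m.1 - ⌊q₁⌋ with hd₁
    set d₂ : ℤ := m.2 - ⌊q₂⌋ with hd₂
    have hd₁le : |d₁| ≤ (D₁:ℤ) := by
      have hc : |(d₁:ℝ)| ≤ (D₁:ℝ) := by
        have h1 : ((d₁:ℤ):ℝ) = ((m.1:ℝ) - q₁) + (q₁ - (⌊q₁⌋:ℝ)) := by
          rw [hd₁]; push_cast; ring
        rw [h1]
        have h3 : (R + 3) / c₁ ≤ (⌈(R + 3) / c₁⌉₊ : ℝ) := Nat.le_ceil _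
        have h4 : (D₁:ℝ) = (⌈(R + 3) / c₁⌉₊ : ℝ) + 1 := by rw [hD₁def]; push_cast; ring
        calc |((m.1:ℝ) - q₁) + (q₁ - (⌊q₁⌋:ℝ))| ≤ |(m.1:ℝ) - q₁| + |q₁ - (⌊q₁⌋:ℝ)| :=
              abs_add_le _ _
          _ ≤ (D₁:ℝ) := by rw [h4]; linarith
      exact_mod_cast hc
    have hd₂le : |d₂| ≤ (D₂:ℤ) := by
      have hc : |(d₂:ℝ)| ≤ (D₂:ℝ) := by
        have h1 : ((d₂:ℤ):ℝ) = ((m.2:ℝ) - q₂) + (q₂ - (⌊q₂⌋:ℝ)) := by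
          rw [hd₂]; push_cast; ring
        rw [h1]
        have h3 : (R + 3) / c₂ ≤ (⌈(R + 3) / c₂⌉₊ : ℝ) := Nat.le_ceil _
        have h4 : (D₂:ℝ) = (⌈(R + 3) / c₂⌉₊ : ℝ) + 1 := by rw [hD₂def]; push_cast; ring
        calc |((m.2:ℝ) - q₂) + (q₂ - (⌊q₂⌋:ℝ))| ≤ |(m.2:ℝ) - q₂| + |q₂ - (⌊q₂⌋:ℝ)| :=
              abs_add_le _ _
          _ ≤ (D₂:ℝ) := by rw [h4]; linarith
      exact_mod_cast hc
    refine Finset.mem_coe.mpr (Finset.mem_image.mpr ⟨⟨k, i, d₁, d₂⟩, ?_, ?_⟩)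
    · rw [hsrc]
      simp only [Finset.mem_product, Finset.mem_Icc, Finset.mem_range]
      exact ⟨abs_le.mp hk, hiN, abs_le.mp hd₁le, abs_le.mp hd₂le⟩
    · simp only [hf]
      rw [← ht, ← hq₁, ← hq₂]
      have e1 : d₁ + ⌊q₁⌋ = m.1 := by omega
      have e2 : d₂ + ⌊q₂⌋ = m.2 := by omega
      rw [e1, e2]
  refine ⟨Set.Finite.subset tgt.finite_toSet hsub, ?_⟩
  -- cardinality bound
  have hcard : (Nat.card {km : ℤ × (ℤ × ℤ) | |km.1| ≤ 2 ^ ((j + 1) / 2) ∧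
      (tsupport (shearEl ψ c₁ c₂ j km.1 km.2 1) ∩ range γ).Nonempty}) ≤ tgt.card := by
    rw [Nat.card_coe_set_eq]
    calc _ ≤ (↑tgt : Set (ℤ × ℤ × ℤ)).ncard := Set.ncard_le_ncard hsub tgt.finite_toSet
      _ = tgt.card := Set.ncard_coe_finset tgt
  have htgtsrc : tgt.card ≤ src.card := Finset.card_image_le
  have hsrccard : (src.card : ℝ) =
      (2 * ((2:ℝ) ^ (e:ℕ)) + 1) * ((N:ℝ) * ((2 * (D₁:ℝ) + 1) * (2 * (D₂:ℝ) + 1))) := by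
    rw [hsrc, Finset.card_product, Finset.card_product, Finset.card_product,
      Finset.card_range]
    push_cast
    rw [int_Icc_card_real _ (by positivity), int_Icc_card_real _ (by positivity),
      int_Icc_card_real _ (by positivity)]
    push_cast
    ring
  -- numeric bounds
  have hE : (2:ℝ) ^ (e:ℕ) ≤ 2 * 2 ^ ((j:ℝ)/2) := by
    calc (2:ℝ) ^ (e:ℕ) = 2 ^ ((e:ℕ):ℝ) := (Real.rpow_natCast 2 e).symm
      _ ≤ 2 ^ ((j:ℝ)/2 + 1) := Real.rpow_le_rpow_of_exponent_le (by norm_num) (by linarith)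
      _ = 2 * 2 ^ ((j:ℝ)/2) := by rw [Real.rpow_add (by norm_num), Real.rpow_one]; ring
  have hone : (1:ℝ) ≤ 2 ^ ((j:ℝ)/2) := by
    have := Real.rpow_le_rpow_of_exponent_le (x := (2:ℝ)) (by norm_num)
      (show (0:ℝ) ≤ (j:ℝ)/2 by positivity)
    simpa [Real.rpow_zero] using this
  have honej : (1:ℝ) ≤ 2 ^ (j:ℝ) := by
    have := Real.rpow_le_rpow_of_exponent_le (x := (2:ℝ)) (by norm_num)
      (show (0:ℝ) ≤ (j:ℝ) by positivity)
    simpa [Real.rpow_zero] using this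
  have hNle : (N:ℝ) ≤ (len + 1) * 2 ^ (j:ℝ) := by
    have h1 : (N:ℝ) < len * 2 ^ (j:ℝ) + 1 := by
      rw [hNdef]; exact Nat.ceil_lt_add_one (by positivity)
    have h2 : (len + 1) * 2 ^ (j:ℝ) = len * 2 ^ (j:ℝ) + 2 ^ (j:ℝ) := by ring
    linarith
  have hpow : (2:ℝ) ^ ((j:ℝ)/2) * 2 ^ (j:ℝ) = 2 ^ (3 * (j:ℝ) / 2) := by
    rw [← Real.rpow_add (by norm_num)]
    congr 1; ring
  have hKle : 2 * ((2:ℝ) ^ (e:ℕ)) + 1 ≤ 5 * 2 ^ ((j:ℝ)/2) := by linarith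
  calc (Nat.card {km : ℤ × (ℤ × ℤ) | |km.1| ≤ 2 ^ ((j + 1) / 2) ∧
      (tsupport (shearEl ψ c₁ c₂ j km.1 km.2 1) ∩ range γ).Nonempty} : ℝ)
      ≤ (tgt.card : ℝ) := Nat.cast_le.mpr hcard
    _ ≤ (src.card : ℝ) := Nat.cast_le.mpr htgtsrc
    _ = (2 * ((2:ℝ) ^ (e:ℕ)) + 1) * ((N:ℝ) * ((2 * (D₁:ℝ) + 1) * (2 * (D₂:ℝ) + 1))) :=
        hsrccard
    _ ≤ (5 * 2 ^ ((j:ℝ)/2)) * (((len + 1) * 2 ^ (j:ℝ)) * ((2 * (D₁:ℝ) + 1) * (2 * (D₂:ℝ) + 1))) := by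
        have hp1 : (0:ℝ) ≤ (2 * (D₁:ℝ) + 1) * (2 * (D₂:ℝ) + 1) := by positivity
        have hp2 : (0:ℝ) ≤ (N:ℝ) := by positivity
        apply mul_le_mul hKle _ (by positivity) (by positivity)
        exact mul_le_mul_of_nonneg_right hNle hp1
    _ = 5 * (len + 1) * (2 * (D₁:ℝ) + 1) * (2 * (D₂:ℝ) + 1) * 2 ^ (3 * (j:ℝ) / 2) := by
        rw [← hpow]; ring

end
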